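/- For every real δ with 0 < δ < 1, every ε > 0, and every positive integer N, there exist an integer p ≥ N and a subset U ⊆ ℤ_p such that ||U|/p − δ| ≤ ε and ‖U‖_u ≤ ε. -/

import Mathlib

open Finset

variable {p : ℕ} [Fact p.Prime]


lemma smallBias_conj_stdAddChar [NeZero p] (x : ZMod p) :
    (starRingEnd ℂ) (ZMod.stdAddChar x) = ZMod.stdAddChar (-x) := by
  rw [ZMod.stdAddChar_apply, ZMod.stdAddChar_apply, ← Circle.coe_inv_eq_conj,
    ← AddChar.map_neg_eq_inv]

lemma smallBias_abs_gaussSum {χ : MulChar (ZMod p) ℂ} (hχ : χ ≠ 1) :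
    ‖gaussSum χ (ZMod.stdAddChar)‖ = Real.sqrt p := by
  have : NeZero p := ⟨(Fact.out : p.Prime).ne_zero⟩
  have hconj : (starRingEnd ℂ) (gaussSum χ (ZMod.stdAddChar)) =
      gaussSum χ⁻¹ (ZMod.stdAddChar)⁻¹ := by
    rw [gaussSum, gaussSum, map_sum]
    refine Finset.sum_congr rfl fun x _ ↦ ?_
    rw [map_mul, starRingEnd_apply, MulChar.star_apply', AddChar.inv_apply, smallBias_conj_stdAddChar]
  have hmul := gaussSum_mul_gaussSum_eq_card hχ (ZMod.isPrimitive_stdAddChar p)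
  rw [← hconj, Complex.mul_conj] at hmul
  have h2 : Complex.normSq (gaussSum χ (ZMod.stdAddChar)) = p := by
    have := congrArg Complex.re hmul
    simpa [ZMod.card] using this
  rw [Complex.norm_def, h2]

lemma smallBias_unit_abs_one (χ : MulChar (ZMod p) ℂ) (a : (ZMod p)ˣ) :
    ‖χ a‖ = 1 := by
  have := MulChar.apply_mem_rootsOfUnity a (χ := χ)
  have h2 := Complex.norm_eq_one_of_mem_rootsOfUnity this
  rwa [MulChar.coe_equivToUnitHom] at h2

lemma smallBias_key {n m : ℕ} (hn : 2 ≤ n) (hmn : m ≤ n) (hdvd : n ∣ p - 1) :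
    ∃ U : Finset (ZMod p), n * U.card = m * (p - 1) ∧
      ∀ a : ZMod p, a ≠ 0 →
        ‖∑ u ∈ U, ZMod.stdAddChar (a * u)‖ ≤ n * Real.sqrt p := by
  classical
  have hp : p.Prime := Fact.out
  haveI : NeZero p := ⟨hp.ne_zero⟩
  have hn0 : n ≠ 0 := by omega
  set ψ : AddChar (ZMod p) ℂ := ZMod.stdAddChar with hψ
  -- character of order n
  obtain ⟨χ, hχ⟩ := MulChar.exists_mulChar_orderOf (ZMod p)
    (by rwa [ZMod.card]) (Complex.isPrimitiveRoot_exp n hn0)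
  have hχn : χ ^ n = 1 := hχ ▸ pow_orderOf_eq_one χ
  -- generator of the unit group
  obtain ⟨g, hg⟩ := IsCyclic.exists_generator (α := (ZMod p)ˣ)
  set ζ : ℂ := χ ↑g with hζ
  -- evaluation at g is an injective monoid hom, so ζ has order n
  have hev : ∀ χ₁ χ₂ : MulChar (ZMod p) ℂ, χ₁ ↑g = χ₂ ↑g → χ₁ = χ₂ :=
    fun χ₁ χ₂ h => (MulChar.eq_iff hg χ₁ χ₂).mpr h
  have hζn : orderOf ζ = n := by
    let ev : MulChar (ZMod p) ℂ →* ℂ :=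
      { toFun := fun φ => φ ↑g,
        map_one' := MulChar.one_apply_coe g,
        map_mul' := fun φ φ' => rfl }
    have : orderOf (ev χ) = orderOf χ := orderOf_injective ev (fun a b h => hev a b h) χ
    exact this.trans hχ
  have hζprim : IsPrimitiveRoot ζ n := hζn ▸ IsPrimitiveRoot.orderOf ζ
  have hζabs : ‖ζ‖ = 1 := smallBias_unit_abs_one χ g
  have hζ0 : ζ ≠ 0 := by
    intro h
    simp [h] at hζabs
  -- values of χ on units
  have hval : ∀ x : ZMod p, x ≠ 0 → ∃ t : ℕ, χ x = ζ ^ t := by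
    intro x hx
    lift x to (ZMod p)ˣ using isUnit_iff_ne_zero.mpr hx with xu
    obtain ⟨t, ht⟩ := (Submonoid.mem_powers_iff _ _).mp
      (((isOfFinOrder_of_finite g).mem_powers_iff_mem_zpowers).mpr (hg xu))
    exact ⟨t, by rw [← ht, Units.val_pow_eq_pow_val, map_pow]⟩
  have hχ0 : χ (0 : ZMod p) = 0 := MulChar.map_nonunit χ not_isUnit_zero
  have hne0 : ∀ (j : ℕ) (x : ZMod p), χ x = ζ ^ j → x ≠ 0 := by
    intro j x h h0
    rw [h0, hχ0] at h
    exact pow_ne_zero j hζ0 h.symm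
  have hunitpow : ∀ x : ZMod p, x ≠ 0 → (χ x) ^ n = 1 := by
    intro x hx
    rw [← MulChar.pow_apply' χ hn0, hχn]
    lift x to (ZMod p)ˣ using isUnit_iff_ne_zero.mpr hx with xu
    exact MulChar.one_apply_coe xu
  -- the fibers
  set A : ℕ → Finset (ZMod p) := fun j => univ.filter (fun x => χ x = ζ ^ j) with hA
  have hginv : χ ↑g⁻¹ = ζ⁻¹ := by
    have : ζ * χ ↑g⁻¹ = 1 := by
      rw [hζ, ← map_mul, ← Units.val_mul, mul_inv_cancel, Units.val_one, MulChar.map_one]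
    field_simp at this ⊢
    linear_combination this
  have hcard : ∀ j, (A j).card = (A 0).card := by
    intro j
    apply Finset.card_nbij' (i := fun x => (↑g⁻¹ : ZMod p) ^ j * x)
      (j := fun x => (↑g : ZMod p) ^ j * x)
    · intro x hx
      simp only [hA, Finset.mem_coe, mem_filter, mem_univ, true_and] at hx ⊢
      rw [map_mul, map_pow, hginv, hx, inv_pow, inv_mul_cancel₀ (pow_ne_zero j hζ0), pow_zero]
    · intro x hx
      simp only [hA, Finset.mem_coe, mem_filter, mem_univ, true_and] at hx ⊢
      rw [map_mul, map_pow, hx, pow_zero, mul_one]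
    · intro x _
      dsimp only
      rw [← mul_assoc, ← mul_pow, Units.mul_inv, one_pow, one_mul]
    · intro x _
      dsimp only
      rw [← mul_assoc, ← mul_pow, Units.inv_mul, one_pow, one_mul]
  have hdisjA : ∀ i ∈ range n, ∀ j ∈ range n, i ≠ j → Disjoint (A i) (A j) := by
    intro i hi j hj hij
    rw [Finset.disjoint_left]
    intro x hxi hxj
    simp only [hA, mem_filter, mem_univ, true_and] at hxi hxj
    exact hij <| hζprim.pow_inj (mem_range.mp hi) (mem_range.mp hj) (hxi ▸ hxj ▸ rfl)
  have hpart : univ.filter (fun x : ZMod p => x ≠ 0) = (range n).biUnion A := by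
    ext x
    simp only [mem_filter, mem_univ, true_and, mem_biUnion, mem_range]
    constructor
    · intro hx
      obtain ⟨t, ht⟩ := hval x hx
      refine ⟨t % n, Nat.mod_lt _ (by omega), ?_⟩
      simp only [hA, mem_filter, mem_univ, true_and]
      rw [ht, ← hζn, pow_mod_orderOf]
    · rintro ⟨j, -, hj⟩
      simp only [hA, mem_filter, mem_univ, true_and] at hj
      exact hne0 j x hj
  have hKcard : n * (A 0).card = p - 1 := by
    have h1 : (univ.filter (fun x : ZMod p => x ≠ 0)).card = p - 1 := by
      rw [Finset.filter_ne', Finset.card_erase_of_mem (mem_univ 0), Finset.card_univ, ZMod.card]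
    rw [← h1, hpart, Finset.card_biUnion hdisjA]
    rw [Finset.sum_congr rfl (fun j _ => hcard j), Finset.sum_const, card_range, smul_eq_mul]
  -- the set U
  refine ⟨(range m).biUnion A, ?_, ?_⟩
  · have : ((range m).biUnion A).card = m * (A 0).card := by
      rw [Finset.card_biUnion (fun i hi j hj hij => hdisjA i
        (mem_range.mpr ((mem_range.mp hi).trans_le hmn)) j
        (mem_range.mpr ((mem_range.mp hj).trans_le hmn)) hij)]
      rw [Finset.sum_congr rfl (fun j _ => hcard j), Finset.sum_const, card_range, smul_eq_mul]
    rw [this, ← mul_assoc, mul_comm n m, mul_assoc, hKcard]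
  · intro a ha
    have hsqrt1 : (1:ℝ) ≤ Real.sqrt p := by
      rw [show (1:ℝ) = Real.sqrt 1 by simp]
      exact Real.sqrt_le_sqrt (by exact_mod_cast hp.one_lt.le)
    set au : (ZMod p)ˣ := (isUnit_iff_ne_zero.mpr ha).unit with hau
    have hauv : (↑au : ZMod p) = a := IsUnit.unit_spec _
    set T : ℕ → ℂ :=
      fun k => ∑ x ∈ univ.filter (fun x : ZMod p => x ≠ 0), (χ x) ^ k * ψ (a * x) with hT
    have hT0 : T 0 = -1 := by
      simp only [hT, pow_zero, one_mul]
      rw [Finset.filter_ne', Finset.sum_erase_eq_sub (mem_univ 0)]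
      have hall : ∑ x : ZMod p, ψ (a * x) = 0 := by
        simp_rw [mul_comm a]
        rw [hψ, AddChar.sum_mulShift _ (ZMod.isPrimitive_stdAddChar p)]
        simp [ha]
      rw [hall, mul_zero, AddChar.map_zero_eq_one]
      ring
    have hTk : ∀ k, 0 < k → k < n → ‖T k‖ = Real.sqrt p := by
      intro k hk0 hkn
      have hχk : χ ^ k ≠ 1 := by
        intro h
        have := Nat.le_of_dvd hk0 (hχ ▸ orderOf_dvd_of_pow_eq_one h)
        omega
      have hTg : T k = gaussSum (χ ^ k) (AddChar.mulShift ψ a) := by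
        simp only [hT, gaussSum, AddChar.mulShift_apply, MulChar.pow_apply' χ hk0.ne']
        refine Finset.sum_subset (Finset.filter_subset _ _) ?_
        intro x _ hx
        simp only [mem_filter, mem_univ, true_and, not_not] at hx
        rw [hx, hχ0, zero_pow hk0.ne', zero_mul]
      have hshift := gaussSum_mulShift (χ ^ k) ψ au
      have habs := congrArg (‖·‖) hshift
      rw [norm_mul, smallBias_unit_abs_one (χ ^ k) au, one_mul, smallBias_abs_gaussSum hχk, hauv] at habs
      rw [hTg, habs]
    have hTabs : ∀ k ∈ range n, ‖T k‖ ≤ Real.sqrt p := by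
      intro k hk
      rcases Nat.eq_zero_or_pos k with rfl | hk0
      · rw [hT0]
        simpa using hsqrt1
      · exact (hTk k hk0 (mem_range.mp hk)).le
    have hζpow : ζ ^ n = 1 := hζprim.pow_eq_one
    have hSj : ∀ j, ‖∑ x ∈ A j, ψ (a * x)‖ ≤ Real.sqrt p := by
      intro j
      have hζj0 : (ζ : ℂ) ^ j ≠ 0 := pow_ne_zero _ hζ0
      have hid : (n : ℂ) * (∑ x ∈ A j, ψ (a * x)) =
          ∑ k ∈ range n, ((ζ ^ j)⁻¹) ^ k * T k := by
        have hswap : ∑ k ∈ range n, ((ζ ^ j)⁻¹) ^ k * T k =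
            ∑ x ∈ univ.filter (fun x : ZMod p => x ≠ 0),
              ∑ k ∈ range n, ((ζ ^ j)⁻¹) ^ k * ((χ x) ^ k * ψ (a * x)) := by
          simp only [hT, Finset.mul_sum]
          rw [Finset.sum_comm]
        have hpoint : ∀ x ∈ univ.filter (fun x : ZMod p => x ≠ 0),
            ∑ k ∈ range n, ((ζ ^ j)⁻¹) ^ k * ((χ x) ^ k * ψ (a * x)) =
            (if χ x = ζ ^ j then (n : ℂ) else 0) * ψ (a * x) := by
          intro x hx
          simp only [mem_filter, mem_univ, true_and] at hx
          have : ∑ k ∈ range n, ((ζ ^ j)⁻¹) ^ k * ((χ x) ^ k * ψ (a * x)) =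
              (∑ k ∈ range n, (χ x / ζ ^ j) ^ k) * ψ (a * x) := by
            rw [Finset.sum_mul]
            refine Finset.sum_congr rfl fun k _ => ?_
            rw [div_pow]
            ring
          rw [this]
          by_cases h : χ x = ζ ^ j
          · rw [if_pos h, h, div_self hζj0]
            simp only [one_pow, Finset.sum_const, card_range, nsmul_eq_mul, mul_one]
          · rw [if_neg h]
            have hw : χ x / ζ ^ j ≠ 1 := by
              intro hw1
              exact h ((div_eq_one_iff_eq hζj0).mp hw1)
            have hwn : (χ x / ζ ^ j) ^ n = 1 := by
              rw [div_pow, hunitpow x hx, ← pow_mul, mul_comm j n, pow_mul, hζpow, one_pow,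
                div_one]
            rw [geom_sum_eq hw, hwn, sub_self, zero_div, zero_mul]
        rw [hswap, Finset.sum_congr rfl hpoint]
        simp_rw [ite_mul, zero_mul, ← Finset.sum_filter]
        rw [Finset.filter_filter]
        have hAeq : univ.filter (fun x : ZMod p => x ≠ 0 ∧ χ x = ζ ^ j) = A j := by
          ext x
          simp only [hA, mem_filter, mem_univ, true_and]
          exact ⟨fun h => h.2, fun h => ⟨hne0 j x h, h⟩⟩
        rw [hAeq, Finset.mul_sum]
      have habs1 : (n : ℝ) * ‖∑ x ∈ A j, ψ (a * x)‖ ≤ (n : ℝ) * Real.sqrt p := by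
        have h1 : ‖(n : ℂ) * (∑ x ∈ A j, ψ (a * x))‖ ≤ (n : ℝ) * Real.sqrt p := by
          rw [hid]
          calc ‖∑ k ∈ range n, ((ζ ^ j)⁻¹) ^ k * T k‖
              ≤ ∑ k ∈ range n, ‖((ζ ^ j)⁻¹) ^ k * T k‖ :=
                norm_sum_le _ _
            _ ≤ ∑ k ∈ range n, Real.sqrt p := Finset.sum_le_sum (fun k hk => by
                rw [norm_mul, norm_pow, norm_inv, norm_pow, hζabs]
                simpa using hTabs k hk)
            _ = n * Real.sqrt p := by rw [Finset.sum_const, card_range, nsmul_eq_mul]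
        rwa [norm_mul, Complex.norm_natCast] at h1
      exact le_of_mul_le_mul_left (by simpa using habs1) (by positivity : (0:ℝ) < (n:ℝ))
    calc ‖∑ u ∈ (range m).biUnion A, ψ (a * u)‖
        = ‖∑ j ∈ range m, ∑ x ∈ A j, ψ (a * x)‖ := by
          rw [Finset.sum_biUnion (fun i hi j hj hij => hdisjA i
            (mem_range.mpr ((mem_range.mp hi).trans_le hmn)) j
            (mem_range.mpr ((mem_range.mp hj).trans_le hmn)) hij)]
      _ ≤ ∑ j ∈ range m, ‖∑ x ∈ A j, ψ (a * x)‖ := by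
          exact norm_sum_le _ _
      _ ≤ ∑ j ∈ range m, Real.sqrt p := Finset.sum_le_sum fun j _ => hSj j
      _ = m * Real.sqrt p := by rw [Finset.sum_const, card_range, nsmul_eq_mul]
      _ ≤ n * Real.sqrt p := by
          have : (0:ℝ) ≤ Real.sqrt p := Real.sqrt_nonneg _
          have hmn' : (m:ℝ) ≤ n := by exact_mod_cast hmn
          nlinarith

lemma exp_eq_stdAddChar' {p : ℕ} [NeZero p] (a u : ZMod p) :
    Complex.exp (2 * (Real.pi : ℂ) * Complex.I *
      (((a.val : ℕ) : ℂ) * ((u.val : ℕ) : ℂ)) / (p : ℂ)) = ZMod.stdAddChar (a * u) := by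
  have h := ZMod.stdAddChar_coe (N := p) ((a.val * u.val : ℕ) : ℤ)
  have h2 : (((a.val * u.val : ℕ) : ℤ) : ZMod p) = a * u := by
    push_cast
    rw [ZMod.natCast_val, ZMod.natCast_val, ZMod.cast_id, ZMod.cast_id]
  rw [h2] at h
  rw [h]
  congr 1
  push_cast
  ring


/-- The Fourier bias of a subset `U ⊆ ℤ_p`:
`‖U‖_u = (1/p)·max_{a ≠ 0} |Σ_{u∈U} exp(2πi a u/p)|`. -/
noncomputable def fourierBias (p : ℕ) (U : Finset (ZMod p)) : ℝ :=
  (1 / p) * ⨆ a : {a : ZMod p // a ≠ 0},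
    ‖∑ u ∈ U, Complex.exp (2 * (Real.pi : ℂ) * Complex.I *
      (((a.1.val : ℕ) : ℂ) * ((u.val : ℕ) : ℂ)) / (p : ℂ))‖

set_option maxHeartbeats 1000000 in
/-- There exist arbitrarily large moduli `p` and subsets `U ⊆ ℤ_p` of any
prescribed density with arbitrarily small Fourier bias. -/
theorem exists_subset_small_fourier_bias (δ ε : ℝ) (hδ0 : 0 < δ) (hδ1 : δ < 1)
    (hε : 0 < ε) (N : ℕ) :
    ∃ p : ℕ, N ≤ p ∧ 0 < p ∧ ∃ U : Finset (ZMod p),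
      |((U.card : ℝ) / (p : ℝ)) - δ| ≤ ε ∧ fourierBias p U ≤ ε := by
  classical
  set n : ℕ := max (⌈1/δ⌉₊ + 2) (⌈4/ε⌉₊ + 2) with hndef
  have hn2 : 2 ≤ n := le_trans (by omega) (le_max_left _ _)
  have hn0R : (0:ℝ) < n := by
    have : 0 < n := by omega
    exact_mod_cast this
  have hδn : 1 < δ * n := by
    have h1 : (1/δ : ℝ) < n := by
      calc (1/δ:ℝ) ≤ (⌈1/δ⌉₊ : ℝ) := Nat.le_ceil _
        _ < ((⌈1/δ⌉₊ + 2 : ℕ) : ℝ) := by exact_mod_cast Nat.lt_add_of_pos_right (by omega)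
        _ ≤ n := by exact_mod_cast le_max_left _ _
    rw [div_lt_iff₀ hδ0] at h1
    rwa [mul_comm]
  have hεn : 4/ε < n := by
    calc (4/ε:ℝ) ≤ (⌈4/ε⌉₊ : ℝ) := Nat.le_ceil _
      _ < ((⌈4/ε⌉₊ + 2 : ℕ) : ℝ) := by exact_mod_cast Nat.lt_add_of_pos_right (by omega)
      _ ≤ n := by exact_mod_cast le_max_right _ _
  set m : ℕ := ⌊δ * n⌋₊ with hmdef
  have hm1 : 1 ≤ m := Nat.le_floor (by exact_mod_cast hδn.le)
  have hmle : (m:ℝ) ≤ δ * n := Nat.floor_le (by positivity)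
  have hmgt : δ * n < m + 1 := Nat.lt_floor_add_one _
  have hmn : m < n := by
    have h2 : δ * n < 1 * n := mul_lt_mul_of_pos_right hδ1 hn0R
    rw [one_mul] at h2
    have : (m:ℝ) < n := lt_of_le_of_lt hmle h2
    exact_mod_cast this
  haveI : NeZero n := ⟨by omega⟩
  set M : ℕ := max N (max ⌈((n:ℝ)/ε)^2⌉₊ ⌈4/ε⌉₊) with hMdef
  obtain ⟨p, hpgt, hpp, hpmod⟩ :=
    Nat.forall_exists_prime_gt_and_eq_mod (a := (1 : ZMod n)) isUnit_one M
  haveI : Fact p.Prime := ⟨hpp⟩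
  haveI : NeZero p := ⟨hpp.ne_zero⟩
  have hp1 : 1 ≤ p := hpp.one_lt.le
  have hp0R : (0:ℝ) < p := by exact_mod_cast hpp.pos
  have hdvd : n ∣ p - 1 := by
    have h0 : ((p - 1 : ℕ) : ZMod n) = 0 := by
      rw [Nat.cast_sub hp1, hpmod]
      ring
    exact (ZMod.natCast_eq_zero_iff _ _).mp h0
  obtain ⟨U, hUcard, hUbound⟩ := smallBias_key hn2 hmn.le hdvd
  have hMp : M ≤ p := hpgt.le
  have hppos : 0 < p := hpp.pos
  have hpM : ∀ k : ℕ, k ≤ M → (k : ℝ) ≤ p := by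
    intro k hk
    exact_mod_cast hk.trans hMp
  have hp4ε : 4/ε ≤ (p:ℝ) :=
    (Nat.le_ceil _).trans (hpM _ (le_trans (le_max_right _ _) (le_max_right _ _)))
  have hpnε : ((n:ℝ)/ε)^2 ≤ (p:ℝ) :=
    (Nat.le_ceil _).trans (hpM _ (le_trans (le_max_left _ _) (le_max_right _ _)))
  refine ⟨p, le_trans (le_max_left _ _) hMp, hppos, U, ?_, ?_⟩
  · -- density
    have hcardR : (n:ℝ) * U.card = m * ((p:ℝ) - 1) := by
      have h := congrArg (fun k : ℕ => (k:ℝ)) hUcard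
      push_cast [Nat.cast_sub hp1] at h
      exact h
    have hUC : (U.card : ℝ) = m * ((p:ℝ) - 1) / n := by
      field_simp
      linarith
    rw [hUC]
    have hxeq : m * ((p:ℝ) - 1) / n / p = m/(n:ℝ) - m/((n:ℝ)*p) := by
      field_simp
    rw [hxeq]
    have hmnR : (m:ℝ) ≤ n := by exact_mod_cast hmn.le
    have h6 : m/(n:ℝ) ≤ δ := by
      rw [div_le_iff₀ hn0R]
      exact hmle
    have h3 : δ - 1/(n:ℝ) ≤ m / n := by
      rw [le_div_iff₀ hn0R]
      have hinv : (δ - 1/(n:ℝ)) * n = δ * n - (1/(n:ℝ)) * n := by ring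
      have hinv2 : (1/(n:ℝ)) * n = 1 := by field_simp
      rw [hinv, hinv2]
      linarith
    have h5 : (0:ℝ) ≤ m/((n:ℝ)*p) := by positivity
    have h5' : m/((n:ℝ)*p) ≤ 1/p := by
      rw [div_le_div_iff₀ (by positivity) hp0R]
      have := mul_le_mul_of_nonneg_right hmnR hp0R.le
      linarith
    have h7 : 1/(n:ℝ) ≤ ε/4 := by
      rw [div_le_iff₀ hn0R]
      rw [div_lt_iff₀ hε] at hεn
      have : ε/4 * n = (ε * n)/4 := by ring
      rw [this]
      linarith
    have h8 : 1/(p:ℝ) ≤ ε/4 := by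
      rw [div_le_iff₀ hp0R]
      rw [div_le_iff₀ hε] at hp4ε
      have : ε/4 * p = (ε * p)/4 := by ring
      rw [this]
      linarith
    rw [abs_le]
    constructor
    · linarith
    · linarith
  · -- bias
    haveI : Nonempty {a : ZMod p // a ≠ 0} := ⟨⟨1, one_ne_zero⟩⟩
    have hsqrt_pos : (0:ℝ) < Real.sqrt p := Real.sqrt_pos.mpr hp0R
    have hsq : Real.sqrt p * Real.sqrt p = (p:ℝ) := Real.mul_self_sqrt hp0R.le
    have hsqge : (n:ℝ)/ε ≤ Real.sqrt p := by
      rw [Real.le_sqrt (by positivity) hp0R.le]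
      exact hpnε
    have h9 : (n:ℝ) ≤ ε * Real.sqrt p := by
      rw [div_le_iff₀ hε] at hsqge
      linarith [mul_comm ε (Real.sqrt p)]
    have hsup : (⨆ a : {a : ZMod p // a ≠ 0},
        ‖∑ u ∈ U, Complex.exp (2 * (Real.pi : ℂ) * Complex.I *
          (((a.1.val : ℕ) : ℂ) * ((u.val : ℕ) : ℂ)) / (p : ℂ))‖) ≤ n * Real.sqrt p := by
      refine ciSup_le fun a => ?_
      have heq : (∑ u ∈ U, Complex.exp (2 * (Real.pi : ℂ) * Complex.I *
          (((a.1.val : ℕ) : ℂ) * ((u.val : ℕ) : ℂ)) / (p : ℂ)))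
          = ∑ u ∈ U, ZMod.stdAddChar (a.1 * u) :=
        Finset.sum_congr rfl fun u _ => exp_eq_stdAddChar' a.1 u
      rw [heq]
      exact hUbound a.1 a.2
    rw [fourierBias]
    calc (1/(p:ℝ)) * _ ≤ (1/(p:ℝ)) * ((n:ℝ) * Real.sqrt p) :=
          mul_le_mul_of_nonneg_left hsup (by positivity)
      _ ≤ ε := by
          rw [one_div, inv_mul_le_iff₀ hp0R]
          calc (n:ℝ) * Real.sqrt p ≤ (ε * Real.sqrt p) * Real.sqrt p :=
                mul_le_mul_of_nonneg_right h9 hsqrt_pos.le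
            _ = (p:ℝ) * ε := by rw [mul_assoc, hsq]; ring
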